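/- For a natural number N and a real (or polynomial variable) z, the sum over j from 0 to N of C(2N+1, 2j)·(1+z²)^(N-j) equals the sum over j from 0 to N of C(N+j, 2j)·4^j·z^(2(N-j)). -/

import Mathlib

open Finset

noncomputable def Lsum (w : ℝ) (N : ℕ) : ℝ :=
  ∑ j ∈ range (N + 1), (Nat.choose (2 * N + 1) (2 * j) : ℝ) * w ^ (N - j)

noncomputable def Msum (w : ℝ) (N : ℕ) : ℝ :=
  ∑ j ∈ range (N + 1), (Nat.choose (2 * N + 1) (2 * j + 1) : ℝ) * w ^ (N - j)

lemma pascal2 (n k : ℕ) :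
    (n + 2).choose (k + 2) = n.choose (k + 2) + 2 * n.choose (k + 1) + n.choose k := by
  simp [Nat.choose_succ_succ]
  ring

lemma hA (w : ℝ) (N : ℕ) :
    (∑ i ∈ range (N+1), ((2*N+1).choose (2*i+2) : ℝ) * w^(N-i)) + w^(N+1)
      = w * Lsum w N := by
  rw [Lsum, Finset.mul_sum, Finset.sum_range_succ, Finset.sum_range_succ']
  rw [show ((2*N+1).choose (2*N+2) : ℝ) = 0 by
    rw [Nat.choose_eq_zero_of_lt (by omega)]; norm_num]
  norm_num
  rw [show w * w ^ N = w ^ (N+1) by ring]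
  congr 1
  apply Finset.sum_congr rfl
  intro i hi
  have hi' : i < N := Finset.mem_range.mp hi
  have h1 : 2*(i+1) = 2*i+2 := by ring
  have h2 : N - (i+1) + 1 = N - i := by omega
  rw [h1, ← h2, pow_succ]
  ring

lemma hB (w : ℝ) (N : ℕ) :
    (∑ i ∈ range (N+1), ((2*N+1).choose (2*i+3) : ℝ) * w^(N-i)) + (2*N+1) * w^(N+1)
      = w * Msum w N := by
  rw [Msum, Finset.mul_sum, Finset.sum_range_succ, Finset.sum_range_succ']
  rw [show ((2*N+1).choose (2*N+3) : ℝ) = 0 by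
    rw [Nat.choose_eq_zero_of_lt (by omega)]; norm_num]
  norm_num
  rw [show w * ((2*N+1) * w ^ N) = (2*N+1) * w ^ (N+1) by ring]
  congr 1
  apply Finset.sum_congr rfl
  intro i hi
  have hi' : i < N := Finset.mem_range.mp hi
  have h1 : 2*(i+1)+1 = 2*i+3 := by ring
  have h2 : N - (i+1) + 1 = N - i := by omega
  rw [h1, ← h2, pow_succ]
  ring

lemma step1 (w : ℝ) (N : ℕ) : Lsum w (N+1) = (w+1) * Lsum w N + 2 * Msum w N := by
  have hM : (∑ i ∈ range (N+1), ((2*N+1).choose (2*i+1) : ℝ) * w^(N-i)) = Msum w N := rfl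
  have hL : (∑ i ∈ range (N+1), ((2*N+1).choose (2*i) : ℝ) * w^(N-i)) = Lsum w N := rfl
  have key : ∀ i ∈ range (N+1),
      ((2*(N+1)+1).choose (2*(i+1)) : ℝ) * w^(N+1-(i+1))
      = ((2*N+1).choose (2*i+2) : ℝ) * w^(N-i)
        + (((2*N+1).choose (2*i+1) : ℝ) * w^(N-i)) * 2
        + ((2*N+1).choose (2*i) : ℝ) * w^(N-i) := by
    intro i hi
    have h1 : 2*(N+1)+1 = (2*N+1)+2 := by ring
    have h2 : 2*(i+1) = 2*i+2 := by ring
    have h3 : N+1-(i+1) = N-i := by omega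
    rw [h1, h2, h3, pascal2]; push_cast; ring
  rw [Lsum, Finset.sum_range_succ', Finset.sum_congr rfl key,
    Finset.sum_add_distrib, Finset.sum_add_distrib, ← Finset.sum_mul, hM, hL]
  norm_num
  linear_combination hA w N

lemma step2 (w : ℝ) (N : ℕ) : Msum w (N+1) = 2*w * Lsum w N + (w+1) * Msum w N := by
  have hM : (∑ i ∈ range (N+1), ((2*N+1).choose (2*i+1) : ℝ) * w^(N-i)) = Msum w N := rfl
  have key : ∀ i ∈ range (N+1),
      ((2*(N+1)+1).choose (2*(i+1)+1) : ℝ) * w^(N+1-(i+1))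
      = ((2*N+1).choose (2*i+3) : ℝ) * w^(N-i)
        + (((2*N+1).choose (2*i+2) : ℝ) * w^(N-i)) * 2
        + ((2*N+1).choose (2*i+1) : ℝ) * w^(N-i) := by
    intro i hi
    have h1 : 2*(N+1)+1 = (2*N+1)+2 := by ring
    have h2 : 2*(i+1)+1 = (2*i+1)+2 := by ring
    have h3 : N+1-(i+1) = N-i := by omega
    rw [h1, h2, h3, pascal2]; push_cast; ring
  rw [Msum, Finset.sum_range_succ', Finset.sum_congr rfl key,
    Finset.sum_add_distrib, Finset.sum_add_distrib, ← Finset.sum_mul, hM]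
  norm_num
  linear_combination 2 * hA w N + hB w N

noncomputable def Rsum (x : ℝ) (N : ℕ) : ℝ :=
  ∑ j ∈ range (N + 1), (Nat.choose (N + j) (2 * j) : ℝ) * 4 ^ j * x ^ (N - j)

lemma pascal3 (n k : ℕ) :
    (n+2).choose (k+2) + n.choose (k+2) = 2 * (n+1).choose (k+2) + n.choose k := by
  simp [Nat.choose_succ_succ]
  ring

lemma r1 (x : ℝ) (N : ℕ) : x * Rsum x (N+1)
    = x^(N+2) + ∑ i ∈ range (N+2), ((N+2+i).choose (2*i+2) : ℝ) * 4^(i+1) * x^(N+1-i) := by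
  rw [Rsum, Finset.mul_sum, Finset.sum_range_succ']
  conv_rhs => rw [Finset.sum_range_succ]
  rw [show ((N+2+(N+1)).choose (2*(N+1)+2) : ℝ) = 0 by
    rw [Nat.choose_eq_zero_of_lt (by omega)]; norm_num]
  norm_num
  rw [show x * x ^ (N+1) = x ^ (N+2) by ring, add_comm]
  congr 1
  apply Finset.sum_congr rfl
  intro i hi
  have hi' : i < N + 1 := Finset.mem_range.mp hi
  have h1 : N+1+(i+1) = N+2+i := by ring
  have h2 : 2*(i+1) = 2*i+2 := by ring
  have h3 : N+1-(i+1)+1 = N+1-i := by omega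
  rw [h1, h2, ← h3, pow_succ]
  ring

lemma r2 (x : ℝ) (N : ℕ) : 4 * Rsum x (N+1)
    = ∑ i ∈ range (N+2), ((N+1+i).choose (2*i) : ℝ) * 4^(i+1) * x^(N+1-i) := by
  rw [Rsum, Finset.mul_sum]
  apply Finset.sum_congr rfl
  intro i hi
  rw [pow_succ]
  ring

lemma r3 (x : ℝ) (N : ℕ) : x^2 * Rsum x N
    = x^(N+2) + ∑ i ∈ range (N+2), ((N+1+i).choose (2*i+2) : ℝ) * 4^(i+1) * x^(N+1-i) := by
  rw [Rsum, Finset.mul_sum, Finset.sum_range_succ']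
  conv_rhs => rw [Finset.sum_range_succ, Finset.sum_range_succ]
  rw [show ((N+1+(N+1)).choose (2*(N+1)+2) : ℝ) = 0 by
    rw [Nat.choose_eq_zero_of_lt (by omega)]; norm_num]
  rw [show ((N+1+N).choose (2*N+2) : ℝ) = 0 by
    rw [Nat.choose_eq_zero_of_lt (by omega)]; norm_num]
  norm_num
  rw [show x^2 * x ^ N = x ^ (N+2) by ring, add_comm]
  congr 1
  apply Finset.sum_congr rfl
  intro i hi
  have hi' : i < N := Finset.mem_range.mp hi
  have h1 : N+(i+1) = N+1+i := by ring
  have h2 : 2*(i+1) = 2*i+2 := by ring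
  have h3 : N-(i+1)+2 = N+1-i := by omega
  rw [h1, h2, ← h3, pow_add]
  ring

lemma r0 (x : ℝ) (N : ℕ) : Rsum x (N+2)
    = x^(N+2) + ∑ i ∈ range (N+2), ((N+3+i).choose (2*i+2) : ℝ) * 4^(i+1) * x^(N+1-i) := by
  rw [Rsum, Finset.sum_range_succ']
  norm_num
  rw [add_comm]
  congr 1
  apply Finset.sum_congr rfl
  intro i hi
  have h1 : N+2+(i+1) = N+3+i := by ring
  have h2 : 2*(i+1) = 2*i+2 := by ring
  have h3 : N+2-(i+1) = N+1-i := by omega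
  rw [h1, h2, h3]

lemma step3 (x : ℝ) (N : ℕ) :
    Rsum x (N+2) = (2*x+4) * Rsum x (N+1) - x^2 * Rsum x N := by
  have hpt : (∑ i ∈ range (N+2), ((N+3+i).choose (2*i+2) : ℝ) * 4^(i+1) * x^(N+1-i))
      = (∑ i ∈ range (N+2), ((N+2+i).choose (2*i+2) : ℝ) * 4^(i+1) * x^(N+1-i)) * 2
        + (∑ i ∈ range (N+2), ((N+1+i).choose (2*i) : ℝ) * 4^(i+1) * x^(N+1-i))
        - (∑ i ∈ range (N+2), ((N+1+i).choose (2*i+2) : ℝ) * 4^(i+1) * x^(N+1-i)) := by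
    have e : ∀ i ∈ range (N+2),
        ((N+3+i).choose (2*i+2) : ℝ) * 4^(i+1) * x^(N+1-i)
        = (((N+2+i).choose (2*i+2) : ℝ) * 4^(i+1) * x^(N+1-i)) * 2
          + ((N+1+i).choose (2*i) : ℝ) * 4^(i+1) * x^(N+1-i)
          - ((N+1+i).choose (2*i+2) : ℝ) * 4^(i+1) * x^(N+1-i) := by
      intro i hi
      have hp := pascal3 (N+1+i) (2*i)
      have hp' : ((N+3+i).choose (2*i+2) : ℝ) + ((N+1+i).choose (2*i+2) : ℝ)
          = 2 * ((N+2+i).choose (2*i+2) : ℝ) + ((N+1+i).choose (2*i) : ℝ) := by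
        have e1 : N+1+i+2 = N+3+i := by ring
        have e2 : N+1+i+1 = N+2+i := by ring
        rw [e1, e2] at hp
        exact_mod_cast congrArg (Nat.cast : ℕ → ℝ) hp
      linear_combination (4^(i+1) * x^(N+1-i)) * hp'
    rw [Finset.sum_congr rfl e, Finset.sum_sub_distrib, Finset.sum_add_distrib,
      ← Finset.sum_mul]
  rw [r0]
  linear_combination hpt - 2 * r1 x N - r2 x N + r3 x N

lemma LM_closed (a : ℝ) (N : ℕ) :
    2 * a * Lsum (a^2) N = (1+a)^(2*N+1) - (1-a)^(2*N+1) ∧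
    2 * Msum (a^2) N = (1+a)^(2*N+1) + (1-a)^(2*N+1) := by
  induction N with
  | zero => constructor <;> simp [Lsum, Msum] <;> ring
  | succ n ih =>
    obtain ⟨h1, h2⟩ := ih
    have hw : (a^2 : ℝ) + 1 = a^2 + 1 := rfl
    have e : 2*(n+1)+1 = (2*n+1)+2 := by ring
    constructor
    · rw [step1, e, pow_add, pow_add]
      linear_combination (a^2+1) * h1 + 2 * a * h2
    · rw [step2, e, pow_add, pow_add]
      linear_combination 2 * a * h1 + (a^2+1) * h2

lemma R_closed (a : ℝ) (N : ℕ) :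
    2 * a * Rsum (a^2-1) N = (1+a)^(2*N+1) - (1-a)^(2*N+1) ∧
    2 * a * Rsum (a^2-1) (N+1) = (1+a)^(2*(N+1)+1) - (1-a)^(2*(N+1)+1) := by
  induction N with
  | zero =>
    constructor
    · simp [Rsum]; ring
    · rw [show (0:ℕ)+1 = 1 from rfl]
      have : Rsum (a^2-1) 1 = (a^2-1) + 4 := by
        simp [Rsum, Finset.sum_range_succ]
      rw [this]; ring
  | succ n ih =>
    obtain ⟨h1, h2⟩ := ih
    refine ⟨h2, ?_⟩
    rw [show n+1+1 = n+2 by rfl, step3]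
    have e : 2*(n+2)+1 = (2*(n+1)+1)+2 := by ring
    rw [e, pow_add, pow_add]
    linear_combination (2*(a^2-1)+4) * h2 - (a^2-1)^2 * h1

theorem binom_poly_identity (N : ℕ) (z : ℝ) :
    ∑ j ∈ Finset.range (N + 1),
      (Nat.choose (2 * N + 1) (2 * j) : ℝ) * (1 + z ^ 2) ^ (N - j)
      = ∑ j ∈ Finset.range (N + 1),
        (Nat.choose (N + j) (2 * j) : ℝ) * 4 ^ j * z ^ (2 * (N - j)) := by
  set a := Real.sqrt (1 + z^2) with ha
  have h0 : (0:ℝ) ≤ 1 + z^2 := by positivity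
  have ha2 : a^2 = 1 + z^2 := Real.sq_sqrt h0
  have hane : a ≠ 0 := by
    intro h
    rw [h] at ha2
    nlinarith
  have hL : ∑ j ∈ Finset.range (N + 1),
      (Nat.choose (2 * N + 1) (2 * j) : ℝ) * (1 + z ^ 2) ^ (N - j) = Lsum (a^2) N := by
    rw [Lsum, ha2]
  have hR : ∑ j ∈ Finset.range (N + 1),
      (Nat.choose (N + j) (2 * j) : ℝ) * 4 ^ j * z ^ (2 * (N - j)) = Rsum (a^2-1) N := by
    rw [Rsum]
    apply Finset.sum_congr rfl
    intro j hj
    rw [pow_mul, show a^2 - 1 = z^2 by rw [ha2]; ring]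
  rw [hL, hR]
  have hl := (LM_closed a N).1
  have hr := (R_closed a N).1
  have : 2 * a * Lsum (a^2) N = 2 * a * Rsum (a^2-1) N := by rw [hl, hr]
  have h2a : (2:ℝ) * a ≠ 0 := by
    simp [hane]
  exact mul_left_cancel₀ h2a this
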